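/- Let A be a finite-dimensional algebra over a field k and let 𝒳 be an additively closed full subcategory of mod A that is closed under quotients of indecomposable modules. Suppose f : X → M is a right minimal 𝒳-approximation of an A-module M, and write X = X_1 ⊕ ⋯ ⊕ X_m with each X_i indecomposable. Then the restriction of f to each direct summand X_i is injective. Moreover, if 𝒳 contains all indecomposable projective A-modules, then f is surjective. -/

import Mathlib

open CategoryTheory CategoryTheory.Limits

attribute [local instance] CategoryTheory.Limits.HasFiniteBiproducts.of_hasFiniteProducts

section Posets

variable {P : Type} [PartialOrder P]

/-- Zigzag connectivity of two elements of a subset `S` of a poset: they are linked by a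
zigzag of comparable pairs inside `S`. -/
def ZigzagConnIn (S : Set P) (a b : S) : Prop :=
  Relation.ReflTransGen (fun u v : S => (u : P) ≤ v ∨ (v : P) ≤ u) a b

/-- A subset of a poset is convex if `x ≤ z ≤ y` with `x, y` in the subset implies `z` is. -/
def IsConvex (S : Set P) : Prop :=
  ∀ ⦃x y z : P⦄, x ∈ S → y ∈ S → x ≤ z → z ≤ y → z ∈ S

/-- An interval of a poset: a nonempty, convex, zigzag-connected subset. -/
def IsIntervalSet (S : Set P) : Prop :=
  S.Nonempty ∧ IsConvex S ∧ ∀ a b : S, ZigzagConnIn S a b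

end Posets

section IntervalModules

variable (k : Type) [Field k] {P : Type} [PartialOrder P]

open Classical in
/-- The linear map between the fibers of the interval module. -/
noncomputable def intervalModuleAux (S : Set P) (p q : P) :
    ↥(if p ∈ S then (⊤ : Submodule k k) else ⊥) →ₗ[k]
      ↥(if q ∈ S then (⊤ : Submodule k k) else ⊥) where
  toFun x := ⟨(if p ∈ S ∧ q ∈ S then (1 : k) else 0) * x.1, by
    by_cases hq : q ∈ S
    · rw [if_pos hq]; exact Submodule.mem_top
    · rw [if_neg hq, if_neg (fun h => hq h.2), zero_mul]; exact Submodule.zero_mem _⟩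
  map_add' x y := by ext; simp [mul_add]
  map_smul' c x := by ext; simp

open Classical in
/-- The interval module `k_S` associated to a convex subset `S` of a poset `P`:
it is `k` at points of `S`, `0` elsewhere, with identity structure maps inside `S`. -/
noncomputable def intervalModule (S : Set P) (hS : IsConvex S) : P ⥤ ModuleCat.{0} k where
  obj p := ModuleCat.of k ↥(if p ∈ S then (⊤ : Submodule k k) else ⊥)
  map {p q} _ := ModuleCat.ofHom (intervalModuleAux k S p q)
  map_id p := by
    apply ModuleCat.hom_ext
    apply LinearMap.ext
    rintro ⟨x, hx⟩
    apply Subtype.ext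
    show (if p ∈ S ∧ p ∈ S then (1 : k) else 0) * x = x
    by_cases hp : p ∈ S
    · simp [hp]
    · rw [if_neg hp] at hx
      simp [hp, (Submodule.mem_bot k).mp hx]
  map_comp {p q r} f g := by
    apply ModuleCat.hom_ext
    apply LinearMap.ext
    rintro ⟨x, hx⟩
    apply Subtype.ext
    show (if p ∈ S ∧ r ∈ S then (1 : k) else 0) * x
      = (if q ∈ S ∧ r ∈ S then (1 : k) else 0) * ((if p ∈ S ∧ q ∈ S then (1 : k) else 0) * x)
    by_cases hp : p ∈ S
    · by_cases hr : r ∈ S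
      · have hq : q ∈ S := hS hp hr (leOfHom f) (leOfHom g)
        simp [hp, hq, hr]
      · simp [hr]
    · rw [if_neg hp] at hx
      simp [(Submodule.mem_bot k).mp hx]

/-- A persistence module is an interval module if it is isomorphic to `k_S` for some
interval `S`. -/
def IsIntervalModule (M : P ⥤ ModuleCat.{0} k) : Prop :=
  ∃ (S : Set P) (hS : IsIntervalSet S), Nonempty (M ≅ intervalModule k S hS.2.1)

/-- A persistence module is interval-decomposable if it is isomorphic to a finite direct sum
of interval modules. -/
def IsIntervalDecomposable (M : P ⥤ ModuleCat.{0} k) : Prop :=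
  ∃ (n : ℕ) (J : Fin n → (P ⥤ ModuleCat.{0} k)),
    (∀ i, IsIntervalModule k (J i)) ∧ Nonempty (M ≅ ⨁ J)

/-- The support of a persistence module. -/
def moduleSupport (M : P ⥤ ModuleCat.{0} k) : Set P := {p : P | ¬ IsZero (M.obj p)}

/-- A persistence module valued in finite-dimensional vector spaces. -/
def PointwiseFinite (M : P ⥤ ModuleCat.{0} k) : Prop :=
  ∀ p : P, FiniteDimensional k (M.obj p)

end IntervalModules

section Approximations

variable {C : Type*} [Category C]

/-- `f : X ⟶ M` is a right `𝒳`-approximation of `M` if `X ∈ 𝒳` and every morphism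
from an object of `𝒳` to `M` factors through `f`. -/
def IsRightApproximation (𝒳 : C → Prop) {X M : C} (f : X ⟶ M) : Prop :=
  𝒳 X ∧ ∀ ⦃Y : C⦄ (g : Y ⟶ M), 𝒳 Y → ∃ h : Y ⟶ X, h ≫ f = g

/-- `f : X ⟶ M` is right minimal if every endomorphism `g` of `X` with `f ∘ g = f`
is an isomorphism. -/
def IsRightMinimal {X M : C} (f : X ⟶ M) : Prop :=
  ∀ g : X ⟶ X, g ≫ f = f → IsIso g

end Approximations

/-- An interval cover: a right minimal approximation by interval-decomposable modules. -/
def IsIntervalCover (k : Type) [Field k] {P : Type} [PartialOrder P]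
    {X M : P ⥤ ModuleCat.{0} k} (f : X ⟶ M) : Prop :=
  IsRightApproximation (IsIntervalDecomposable k) f ∧ IsRightMinimal f

section Resolutions

variable {C : Type*} [Category C] [Limits.HasZeroMorphisms C]

/-- `M` admits a resolution `0 ⟶ J_n ⟶ ⋯ ⟶ J_1 ⟶ J_0 ⟶ M ⟶ 0` of length `n` by objects
of `𝒳`: an exact sequence in which every `J_i` lies in `𝒳`.  (The data is encoded by an
`ℕ`-indexed complex which vanishes in degrees `> n` and is exact everywhere.) -/
def HasResolutionOfLength (𝒳 : C → Prop) (n : ℕ) (M : C) : Prop :=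
  ∃ (J : ℕ → C) (d : ∀ i, J (i + 1) ⟶ J i) (f : J 0 ⟶ M) (w0 : d 0 ≫ f = 0)
    (w : ∀ i, d (i + 1) ≫ d i = 0),
    (∀ i, i ≤ n → 𝒳 (J i)) ∧ (∀ i, n < i → IsZero (J i)) ∧
    Epi f ∧ (ShortComplex.mk (d 0) f w0).Exact ∧
    ∀ i, (ShortComplex.mk (d (i + 1)) (d i) (w i)).Exact

end Resolutions

section ModA

/-- `k`-linear structure on the category of finite-dimensional modules over a
`k`-algebra `A`. -/
noncomputable instance fgModuleCatLinear (k A : Type) [Field k] [Ring A] [Algebra k A] :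
    Linear k (FGModuleCat A) := by
  dsimp [FGModuleCat]
  infer_instance

variable {C : Type*} [Category C] [Preadditive C]

/-- `Z`, together with the given injections and projections, is a biproduct (direct sum)
of `X` and `Y`. -/
def IsBiproductOf (Z X Y : C) (ι₁ : X ⟶ Z) (ι₂ : Y ⟶ Z) (π₁ : Z ⟶ X) (π₂ : Z ⟶ Y) : Prop :=
  ι₁ ≫ π₁ = 𝟙 X ∧ ι₂ ≫ π₂ = 𝟙 Y ∧ ι₁ ≫ π₂ = 0 ∧ ι₂ ≫ π₁ = 0 ∧ π₁ ≫ ι₁ + π₂ ≫ ι₂ = 𝟙 Z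

/-- An object is indecomposable if it is nonzero and, whenever it is a direct sum of two
objects, one of them is zero. -/
def IndecObj (X : C) : Prop :=
  ¬ Limits.IsZero X ∧ ∀ (Y Z : C) (ι₁ : Y ⟶ X) (ι₂ : Z ⟶ X) (π₁ : X ⟶ Y) (π₂ : X ⟶ Z),
    IsBiproductOf X Y Z ι₁ ι₂ π₁ π₂ → Limits.IsZero Y ∨ Limits.IsZero Z

/-- A predicate (class of objects) `𝒳` is additively closed: closed under isomorphisms,
finite direct sums and direct summands. -/
def AdditivelyClosed (𝒳 : C → Prop) : Prop :=
  (∀ ⦃X Y : C⦄, (X ≅ Y) → 𝒳 X → 𝒳 Y) ∧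
  (∀ (Z X Y : C) (ι₁ : X ⟶ Z) (ι₂ : Y ⟶ Z) (π₁ : Z ⟶ X) (π₂ : Z ⟶ Y),
    IsBiproductOf Z X Y ι₁ ι₂ π₁ π₂ → 𝒳 X → 𝒳 Y → 𝒳 Z) ∧
  (∀ (Z X Y : C) (ι₁ : X ⟶ Z) (ι₂ : Y ⟶ Z) (π₁ : Z ⟶ X) (π₂ : Z ⟶ Y),
    IsBiproductOf Z X Y ι₁ ι₂ π₁ π₂ → 𝒳 Z → 𝒳 X)

/-- `𝒳` is closed under quotients of indecomposable objects: for a short exact sequence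
`0 → Z → X → Y → 0` with `X` indecomposable, `X ∈ 𝒳` implies `Y ∈ 𝒳`. -/
def ClosedUnderQuotientsOfIndec (𝒳 : C → Prop) : Prop :=
  ∀ S : ShortComplex C, S.ShortExact → IndecObj S.X₂ → 𝒳 S.X₂ → 𝒳 S.X₃

end ModA

section AuxRM
open CategoryTheory Limits

namespace RMAux

variable {A : Type} [Ring A]

lemma ev_congr {P Q : FGModuleCat A} {u v : P ⟶ Q} (h : u = v) (x : P) : u x = v x :=
  congrFun (congrArg (fun f : P ⟶ Q => ⇑f) h) x

lemma ev_comp {P Q R : FGModuleCat A} (u : P ⟶ Q) (v : Q ⟶ R) (x : P) : (u ≫ v) x = v (u x) :=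
  rfl

lemma ev_id (P : FGModuleCat A) (x : P) : (𝟙 P : P ⟶ P) x = x := rfl

lemma hext {P Q : FGModuleCat A} {u v : P ⟶ Q} (h : ∀ x, u x = v x) : u = v :=
  FGModuleCat.hom_ext (LinearMap.ext h)

/-- a linear map as a morphism -/
def toH {P Q : FGModuleCat A} (L : P →ₗ[A] Q) : P ⟶ Q :=
  ObjectProperty.homMk (ModuleCat.ofHom L)

lemma ev_zero {P Q : FGModuleCat A} (x : P) : (0 : P ⟶ Q) x = 0 := rfl

lemma ev_sub {P Q : FGModuleCat A} (u v : P ⟶ Q) (x : P) : (u - v) x = u x - v x := rfl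

lemma ev_add {P Q : FGModuleCat A} (u v : P ⟶ Q) (x : P) : (u + v) x = u x + v x := rfl

lemma isZero_of_subsingleton (X : FGModuleCat A) (h : Subsingleton X) : IsZero X :=
  (Limits.IsZero.iff_id_eq_zero X).mpr (by
    apply hext; intro x
    exact (Subsingleton.elim (α := X) _ _ : _))

lemma subsingleton_of_isZero {X : FGModuleCat A} (h : IsZero X) : Subsingleton X := by
  have h0 : (𝟙 X : X ⟶ X) = 0 := (Limits.IsZero.iff_id_eq_zero X).mp h
  refine ⟨fun a b => ?_⟩
  have hz : ∀ c : X, c = 0 := fun c => by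
    have := congrFun (congrArg (fun f : X ⟶ X => ⇑f) h0) c
    exact this.trans (ev_zero c)
  rw [hz a, hz b]

section Noeth

variable [IsNoetherianRing A]

instance submodFinite (X : FGModuleCat A) (K : Submodule A X) : Module.Finite A ↥K :=
  Module.Finite.iff_fg.mpr (IsNoetherian.noetherian K)

/-- The submodule as an object. -/
noncomputable def subObj (X : FGModuleCat A) (K : Submodule A X) : FGModuleCat A :=
  FGModuleCat.of A ↥K

/-- The quotient as an object. -/
noncomputable def quotObj (X : FGModuleCat A) (K : Submodule A X) : FGModuleCat A :=
  FGModuleCat.of A (X ⧸ K)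

/-- inclusion -/
noncomputable def inclM (X : FGModuleCat A) (K : Submodule A X) : subObj X K ⟶ X :=
  toH K.subtype

/-- quotient map -/
noncomputable def quotM (X : FGModuleCat A) (K : Submodule A X) : X ⟶ quotObj X K :=
  toH K.mkQ

lemma incl_quot_zero (X : FGModuleCat A) (K : Submodule A X) :
    inclM X K ≫ quotM X K = 0 := by
  apply hext; rintro ⟨x, hx⟩
  exact (Submodule.Quotient.mk_eq_zero K).mpr hx

/-- the short complex K → X → X/K -/
noncomputable def ses (X : FGModuleCat A) (K : Submodule A X) : ShortComplex (FGModuleCat A) :=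
  ShortComplex.mk (inclM X K) (quotM X K) (incl_quot_zero X K)

instance (X : FGModuleCat A) (K : Submodule A X) : Mono (inclM X K) := by
  refine ⟨fun {W} u v h => ?_⟩
  apply hext; intro x
  apply Subtype.ext
  exact congrFun (congrArg (fun f : W ⟶ X => ⇑f) h) x

instance (X : FGModuleCat A) (K : Submodule A X) : Epi (quotM X K) := by
  refine ⟨fun {W} u v h => ?_⟩
  exact FGModuleCat.hom_ext (Submodule.linearMap_qext _ (congrArg (fun f => f.hom.hom) h))

end Noeth

/-- a zero object -/
noncomputable def zObj : FGModuleCat A := FGModuleCat.of A PUnit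

instance : Subsingleton (zObj (A := A)) := inferInstanceAs (Subsingleton PUnit)

lemma hom_to_z {W : FGModuleCat A} (u : W ⟶ zObj) : u = 0 := by
  apply hext; intro x
  exact Subsingleton.elim (α := PUnit) _ _

lemma hom_from_z {W : FGModuleCat A} (u : (zObj : FGModuleCat A) ⟶ W) : u = 0 := by
  apply hext; intro x
  have hx : x = 0 := Subsingleton.elim (α := PUnit) x 0
  rw [hx, map_zero, map_zero]

/-- cokernel cofork of an identity-like endomorphism, with nadir a zero object -/
noncomputable def cokerOfId {P : FGModuleCat A} {φ : P ⟶ P} (hφ : φ = 𝟙 P)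
    (w : φ ≫ (0 : P ⟶ zObj) = 0) :
    IsColimit (CokernelCofork.ofπ (0 : P ⟶ zObj) w) :=
  CokernelCofork.IsColimit.ofπ _ _
    (fun {W} _ _ => 0)
    (fun {W} t ht => by
      have h0 : t = 0 := by rw [← Category.id_comp t, ← hφ, ht]
      rw [zero_comp]; exact h0.symm)
    (fun {W} t ht m _ => by rw [hom_from_z m, hom_from_z 0])

/-- kernel fork of an identity-like endomorphism, with nadir a zero object -/
noncomputable def kerOfId {P : FGModuleCat A} {φ : P ⟶ P} (hφ : φ = 𝟙 P)
    (w : (0 : (zObj : FGModuleCat A) ⟶ P) ≫ φ = 0) :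
    IsLimit (KernelFork.ofι (0 : (zObj : FGModuleCat A) ⟶ P) w) :=
  KernelFork.IsLimit.ofι _ _
    (fun {W} _ _ => 0)
    (fun {W} t ht => by
      have h0 : t = 0 := by rw [← Category.comp_id t, ← hφ, ht]
      rw [comp_zero]; exact h0.symm)
    (fun {W} t ht m _ => by rw [hom_to_z m, hom_to_z 0])

section Noeth2
variable [IsNoetherianRing A]

/-- `inclM` is a kernel of `quotM`. -/
noncomputable def kerIsLimit (X : FGModuleCat A) (K : Submodule A X) :
    IsLimit (KernelFork.ofι (inclM X K) (incl_quot_zero X K)) :=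
  KernelFork.IsLimit.ofι' _ _ (fun {W} t ht =>
    ⟨toH (LinearMap.codRestrict K t.hom.hom (fun w => by
        have h2 : K.mkQ (t w) = 0 :=
          congrFun (congrArg (fun f : W ⟶ quotObj X K => ⇑f) ht) w
        exact (Submodule.Quotient.mk_eq_zero K).mp
          (by rw [← Submodule.mkQ_apply]; exact h2))),
     by apply hext; intro w; rfl⟩)

/-- `quotM` is a cokernel of `inclM`. -/
noncomputable def cokerIsColimit (X : FGModuleCat A) (K : Submodule A X) :
    IsColimit (CokernelCofork.ofπ (quotM X K) (incl_quot_zero X K)) :=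
  CokernelCofork.IsColimit.ofπ' _ _ (fun {W} t ht =>
    ⟨toH (K.liftQ t.hom.hom (fun x hx => by
        have h2 : t x = 0 :=
          congrFun (congrArg (fun f : subObj X K ⟶ W => ⇑f) ht) ⟨x, hx⟩
        exact LinearMap.mem_ker.mpr h2)),
     FGModuleCat.hom_ext (Submodule.liftQ_mkQ _ _ _)⟩)

lemma lift_f_eq_id (X : FGModuleCat A) (K : Submodule A X) :
    (kerIsLimit X K).lift (KernelFork.ofι (ses X K).f (ses X K).zero) = 𝟙 (subObj X K) := by
  refine (cancel_mono (inclM X K)).mp ?_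
  have := Fork.IsLimit.lift_ι (t := (KernelFork.ofι (ses X K).f (ses X K).zero))
    (kerIsLimit X K)
  simpa [ses] using this

lemma desc_g_eq_id (X : FGModuleCat A) (K : Submodule A X) :
    (cokerIsColimit X K).desc (CokernelCofork.ofπ (ses X K).g (ses X K).zero)
      = 𝟙 (quotObj X K) := by
  refine (cancel_epi (quotM X K)).mp ?_
  have := Cofork.IsColimit.π_desc (t := (CokernelCofork.ofπ (ses X K).g (ses X K).zero))
    (cokerIsColimit X K)
  simpa [ses] using this

/-- homology data for the ses -/
noncomputable def sesHD (X : FGModuleCat A) (K : Submodule A X) :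
    (ses X K).HomologyData where
  left :=
  { K := subObj X K
    H := zObj
    i := inclM X K
    π := 0
    wi := incl_quot_zero X K
    hi := kerIsLimit X K
    wπ := comp_zero
    hπ := cokerOfId (lift_f_eq_id X K) _ }
  right :=
  { Q := quotObj X K
    H := zObj
    p := quotM X K
    ι := 0
    wp := incl_quot_zero X K
    hp := cokerIsColimit X K
    wι := zero_comp
    hι := kerOfId (desc_g_eq_id X K) _ }
  iso := Iso.refl _
  comm := by
    rw [zero_comp]
    exact (incl_quot_zero X K).symm

lemma ses_shortExact (X : FGModuleCat A) (K : Submodule A X) : (ses X K).ShortExact where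
  exact := ⟨⟨sesHD X K, isZero_of_subsingleton _ (inferInstanceAs (Subsingleton PUnit))⟩⟩
  mono_f := inferInstanceAs (Mono (inclM X K))
  epi_g := inferInstanceAs (Epi (quotM X K))

end Noeth2

section Kdim

variable (k : Type) [Field k] [Algebra k A]

/-- dimension over the base field -/
noncomputable def kdim (N : FGModuleCat A) : ℕ :=
  letI : Module k N := Module.compHom N (algebraMap k A)
  Module.finrank k N

variable [FiniteDimensional k A]

lemma kdim_pos (N : FGModuleCat A) (h : Nontrivial N) : 0 < kdim k N := by
  unfold kdim
  letI : Module k N := Module.compHom N (algebraMap k A)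
  haveI : IsScalarTower k A N := ⟨fun c a x => by
    show ((c • a : A)) • x = (algebraMap k A c) • (a • x)
    rw [Algebra.smul_def, mul_smul]⟩
  haveI : Module.Finite k N := Module.Finite.trans A N
  exact Module.finrank_pos

lemma kdim_eq_zero (N : FGModuleCat A) (h : kdim k N = 0) : Subsingleton N := by
  by_contra hs
  have := kdim_pos k N (not_subsingleton_iff_nontrivial.mp hs)
  omega

lemma kdim_add (N Y Z : FGModuleCat A) (ι₁ : Y ⟶ N) (ι₂ : Z ⟶ N) (π₁ : N ⟶ Y) (π₂ : N ⟶ Z)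
    (h1 : ι₁ ≫ π₁ = 𝟙 Y) (h2 : ι₂ ≫ π₂ = 𝟙 Z) (h3 : ι₁ ≫ π₂ = 0) (h4 : ι₂ ≫ π₁ = 0)
    (h5 : π₁ ≫ ι₁ + π₂ ≫ ι₂ = 𝟙 N) :
    kdim k N = kdim k Y + kdim k Z := by
  have e : N ≃ₗ[A] (Y × Z) := by
    refine LinearEquiv.ofLinear (LinearMap.prod π₁.hom.hom π₂.hom.hom)
      (ι₁.hom.hom.comp (LinearMap.fst A Y Z) + ι₂.hom.hom.comp (LinearMap.snd A Y Z))
      ?_ ?_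
    · apply LinearMap.ext; rintro ⟨y, z⟩
      have e1 : π₁.hom.hom (ι₁.hom.hom y) = y := ev_congr h1 y
      have e2 : π₂.hom.hom (ι₂.hom.hom z) = z := ev_congr h2 z
      have e3 : π₂.hom.hom (ι₁.hom.hom y) = 0 := ev_congr h3 y
      have e4 : π₁.hom.hom (ι₂.hom.hom z) = 0 := ev_congr h4 z
      simp [LinearMap.prod_apply, Prod.ext_iff, map_add, e1, e2, e3, e4]
    · apply LinearMap.ext; intro x
      have e5 : ι₁.hom.hom (π₁.hom.hom x) + ι₂.hom.hom (π₂.hom.hom x) = x := ev_congr h5 x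
      simpa using e5
  letI : Module k N := Module.compHom N (algebraMap k A)
  letI : Module k Y := Module.compHom Y (algebraMap k A)
  letI : Module k Z := Module.compHom Z (algebraMap k A)
  haveI tN : IsScalarTower k A N := ⟨fun c a x => by
    show ((c • a : A)) • x = (algebraMap k A c) • (a • x); rw [Algebra.smul_def, mul_smul]⟩
  haveI tY : IsScalarTower k A Y := ⟨fun c a x => by
    show ((c • a : A)) • x = (algebraMap k A c) • (a • x); rw [Algebra.smul_def, mul_smul]⟩
  haveI tZ : IsScalarTower k A Z := ⟨fun c a x => by
    show ((c • a : A)) • x = (algebraMap k A c) • (a • x); rw [Algebra.smul_def, mul_smul]⟩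
  haveI : Module.Finite k N := Module.Finite.trans A N
  haveI : Module.Finite k Y := Module.Finite.trans A Y
  haveI : Module.Finite k Z := Module.Finite.trans A Z
  have := (e.restrictScalars k).finrank_eq
  unfold kdim
  rw [this, Module.finrank_prod]

end Kdim

lemma surjective_of_epi [IsNoetherianRing A] {N W : FGModuleCat A} (e : N ⟶ W) (he : Epi e) :
    Function.Surjective ⇑e := by
  set R : Submodule A W := LinearMap.range e.hom.hom with hR
  have hq : e ≫ quotM W R = e ≫ 0 := by
    apply hext; intro x
    show R.mkQ (e x) = (0 : W ⧸ R)
    rw [Submodule.mkQ_apply, Submodule.Quotient.mk_eq_zero]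
    exact ⟨x, rfl⟩
  have hz : quotM W R = 0 := he.left_cancellation _ _ hq
  intro w
  have hw : R.mkQ w = (0 : W ⟶ quotObj W R) w := ev_congr hz w
  exact (Submodule.Quotient.mk_eq_zero R).mp (by rw [← Submodule.mkQ_apply]; exact hw)

lemma projective_retract {N Y : FGModuleCat A} (s : Y ⟶ N) (r : N ⟶ Y) (hsr : s ≫ r = 𝟙 Y)
    (hN : Projective N) : Projective Y where
  factors {E X'} f e he := by
    obtain ⟨l, hl⟩ := hN.factors (r ≫ f) e
    exact ⟨s ≫ l, by rw [Category.assoc, hl, ← Category.assoc, hsr, Category.id_comp]⟩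

lemma projective_free [IsNoetherianRing A] (n : ℕ) :
    Projective (FGModuleCat.of A (ULift.{v} (Fin n → A))) where
  factors {E X'} g e he := by
    have hsurj : Function.Surjective ⇑e := surjective_of_epi e he
    haveI : Module.Projective A (FGModuleCat.of A (ULift.{v} (Fin n → A))) :=
      inferInstanceAs (Module.Projective A (ULift.{v} (Fin n → A)))
    obtain ⟨h, hh⟩ :=
      Module.projective_lifting_property e.hom.hom
        g.hom.hom hsurj
    refine ⟨toH h, ?_⟩
    apply hext; intro x
    exact LinearMap.congr_fun hh x

end RMAux
end AuxRM

/-- Let `A` be a finite-dimensional algebra over a field `k` and `𝒳` an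
additively closed class of finite-dimensional `A`-modules closed under quotients of
indecomposable modules.  If `f : X ⟶ M` is a right minimal `𝒳`-approximation and
`X = X_1 ⊕ ⋯ ⊕ X_m` with each `X_i` indecomposable, then `f` restricted to each `X_i` is
injective; moreover if `𝒳` contains all indecomposable projective modules then `f` is
surjective. -/
theorem rightMinimalApproximation_summand_injective
    (k : Type) [Field k] (A : Type) [Ring A] [Algebra k A] [FiniteDimensional k A]
    (𝒳 : FGModuleCat A → Prop)
    (hadd : AdditivelyClosed 𝒳) (hquot : ClosedUnderQuotientsOfIndec 𝒳)
    (M X : FGModuleCat A) (f : X ⟶ M)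
    (happrox : IsRightApproximation 𝒳 f) (hmin : IsRightMinimal f)
    (m : ℕ) (Xs : Fin m → FGModuleCat A) (hXs : ∀ i, IndecObj (Xs i))
    (ι : ∀ i, Xs i ⟶ X) (π : ∀ i, X ⟶ Xs i)
    (hιπ : ∀ i, ι i ≫ π i = 𝟙 (Xs i))
    (hιπ' : ∀ i j, i ≠ j → ι i ≫ π j = 0)
    (hsum : (∑ i : Fin m, π i ≫ ι i) = 𝟙 X) :
    (∀ i, Function.Injective ⇑(ι i ≫ f)) ∧
    ((∀ J : FGModuleCat A, Projective J → IndecObj J → 𝒳 J) →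
      Function.Surjective ⇑f) := by
  haveI hNoeth : IsNoetherianRing A :=
    isNoetherianRing_iff.mpr (isNoetherian_of_tower k inferInstance)
  constructor
  · intro i
    set φ : Xs i ⟶ M := ι i ≫ f with hφ
    set K : Submodule A (Xs i) := LinearMap.ker φ.hom.hom with hK
    by_contra hinj
    obtain ⟨x, hxK, hx0⟩ : ∃ x ∈ K, x ≠ 0 := by
      by_contra h'
      push_neg at h'
      exact hinj (LinearMap.ker_eq_bot.mp ((Submodule.eq_bot_iff _).mpr h'))
    -- `Xs i` belongs to 𝒳, being a direct summand of `X`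
    have hXi : 𝒳 (Xs i) := by
      set Kc : Submodule A X := LinearMap.ker (π i).hom.hom with hKc
      have hmem : ∀ x : X, ((𝟙 X - π i ≫ ι i : X ⟶ X)) x ∈ Kc := fun x => by
        rw [hKc]
        refine LinearMap.mem_ker.mpr ?_
        have hx : π i (ι i (π i x)) = π i x := RMAux.ev_congr (hιπ i) (π i x)
        have hsub : ((𝟙 X - π i ≫ ι i : X ⟶ X) x) = x - ι i (π i x) := rfl
        rw [hsub]; show π i (x - ι i (π i x)) = 0; rw [map_sub, hx, sub_self]
      refine hadd.2.2 X (Xs i) (RMAux.subObj X Kc) (ι i) (RMAux.inclM X Kc) (π i)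
        (RMAux.toH (LinearMap.codRestrict Kc (𝟙 X - π i ≫ ι i : X ⟶ X).hom.hom hmem))
        ⟨hιπ i, ?_, ?_, ?_, ?_⟩ happrox.1
      · apply RMAux.hext; rintro ⟨y, hy⟩
        apply Subtype.ext
        show y - ι i (π i y) = y
        have hy0 : π i y = 0 := hy
        rw [hy0, map_zero, sub_zero]
      · apply RMAux.hext; intro y
        apply Subtype.ext
        show ι i y - ι i (π i (ι i y)) = 0
        have hyy : π i (ι i y) = y := RMAux.ev_congr (hιπ i) y
        rw [hyy, sub_self]
      · apply RMAux.hext; rintro ⟨y, hy⟩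
        exact hy
      · have hc : (RMAux.toH (LinearMap.codRestrict Kc (𝟙 X - π i ≫ ι i : X ⟶ X).hom.hom hmem)
            : X ⟶ RMAux.subObj X Kc) ≫ RMAux.inclM X Kc = 𝟙 X - π i ≫ ι i :=
          FGModuleCat.hom_ext (LinearMap.subtype_comp_codRestrict _ _ _)
        rw [hc]
        abel
    -- the quotient belongs to 𝒳
    have h𝒳Q : 𝒳 (RMAux.quotObj (Xs i) K) :=
      hquot (RMAux.ses (Xs i) K) (RMAux.ses_shortExact _ _) (hXs i) hXi
    obtain ⟨h, hh⟩ := happrox.2 ((RMAux.toH (K.liftQ φ.hom.hom hK.le) : RMAux.quotObj (Xs i) K ⟶ M)) h𝒳Q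
    set g : X ⟶ X := 𝟙 X - π i ≫ ι i + π i ≫ (RMAux.quotM (Xs i) K) ≫ h with hg
    have hq : (RMAux.quotM (Xs i) K) ≫ (RMAux.toH (K.liftQ φ.hom.hom hK.le) : RMAux.quotObj (Xs i) K ⟶ M) = φ :=
      FGModuleCat.hom_ext (Submodule.liftQ_mkQ _ _ _)
    have hgf : g ≫ f = f := by
      rw [hg, Preadditive.add_comp, Preadditive.sub_comp, Category.id_comp]
      simp only [Category.assoc]
      rw [hh, hq, hφ]
      abel
    have hiso : IsIso g := hmin g hgf
    have hginj : Function.Injective ⇑g := by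
      intro a b hab
      have hgi : g ≫ inv g = 𝟙 X := IsIso.hom_inv_id g
      have ha : (inv g) (g a) = a := RMAux.ev_congr hgi a
      have hb : (inv g) (g b) = b := RMAux.ev_congr hgi b
      rw [← ha, ← hb, hab]
    have hq0 : K.mkQ x = 0 := by
      rw [Submodule.mkQ_apply, Submodule.Quotient.mk_eq_zero]; exact hxK
    have hgx : g (ι i x) = 0 := by
      have e1 : π i (ι i x) = x := RMAux.ev_congr (hιπ i) x
      have e2 : g (ι i x)
          = ι i x - ι i (π i (ι i x)) + h (K.mkQ (π i (ι i x))) := rfl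
      rw [e2, e1, hq0, sub_self, zero_add]; exact map_zero (ConcreteCategory.hom h)
    have hιx : ι i x = 0 := hginj (by rw [hgx, map_zero])
    apply hx0
    have e1 : π i (ι i x) = x := RMAux.ev_congr (hιπ i) x
    rw [← e1, hιx, map_zero]
  · intro hproj
    have hzero𝒳 : ∀ N : FGModuleCat A, Subsingleton N → 𝒳 N := fun N hN => by
      refine hadd.2.2 X N X 0 (𝟙 X) 0 (𝟙 X)
        ⟨?_, by simp, by simp, by simp, by simp⟩ happrox.1
      apply RMAux.hext; intro x
      exact (Subsingleton.elim (α := N) _ _ : _)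
    have main : ∀ n (N : FGModuleCat A), RMAux.kdim k N ≤ n → Projective N → 𝒳 N := by
      intro n
      induction n with
      | zero =>
        intro N hle hP
        exact hzero𝒳 N (RMAux.kdim_eq_zero k N (Nat.le_zero.mp hle))
      | succ n IH =>
        intro N hle hP
        by_cases hs : Subsingleton N
        · exact hzero𝒳 N hs
        by_cases hind : IndecObj N
        · exact hproj N hP hind
        have hnz : ¬ Limits.IsZero N := fun hz => hs (RMAux.subsingleton_of_isZero hz)
        rw [IndecObj, not_and_or] at hind
        rcases hind with h1 | h2
        · exact absurd hnz (not_not.mpr (not_not.mp h1)).elim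
        push_neg at h2
        obtain ⟨Y, Z, ι₁, ι₂, π₁, π₂, hbip, hY, hZ⟩ := h2
        obtain ⟨b1, b2, b3, b4, b5⟩ := hbip
        have hYnt : Nontrivial Y := not_subsingleton_iff_nontrivial.mp
          (fun hs' => hY (RMAux.isZero_of_subsingleton _ hs'))
        have hZnt : Nontrivial Z := not_subsingleton_iff_nontrivial.mp
          (fun hs' => hZ (RMAux.isZero_of_subsingleton _ hs'))
        have hdim := RMAux.kdim_add k N Y Z ι₁ ι₂ π₁ π₂ b1 b2 b3 b4 b5
        have hYpos := RMAux.kdim_pos k Y hYnt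
        have hZpos := RMAux.kdim_pos k Z hZnt
        have hYle : RMAux.kdim k Y ≤ n := by omega
        have hZle : RMAux.kdim k Z ≤ n := by omega
        exact hadd.2.1 N Y Z ι₁ ι₂ π₁ π₂ ⟨b1, b2, b3, b4, b5⟩
          (IH Y hYle (RMAux.projective_retract ι₁ π₁ b1 hP))
          (IH Z hZle (RMAux.projective_retract ι₂ π₂ b2 hP))
    obtain ⟨n, p₀, hp₀⟩ := Module.Finite.exists_fin' A M
    have h𝒳P : 𝒳 (FGModuleCat.of A (ULift (Fin n → A))) :=
      main _ _ le_rfl (RMAux.projective_free n)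
    obtain ⟨h, hh⟩ := happrox.2 ((RMAux.toH (p₀.comp (ULift.moduleEquiv : ULift (Fin n → A) ≃ₗ[A] _).toLinearMap)
      : FGModuleCat.of A (ULift (Fin n → A)) ⟶ M)) h𝒳P
    intro y
    obtain ⟨v, hv⟩ := hp₀ y
    exact ⟨h (ULift.up v), ((RMAux.ev_congr hh (ULift.up v)).trans hv : _)⟩
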